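/- arXiv:2301.09530 — 5 statements merged into one kernel-verified Lean document; each statement's English description precedes it below -/
import Mathlib

section
/- Let π ∈ S_n be a rectangular permutation. Then ρ_{1,1}(π) and ρ_{1,2}(π) are rectangular; and if n ≥ 1, then ρ_{π_1,1}(π) and ρ_{π_1+1,1}(π) are rectangular, where π_1 is the first value of π in one-line notation. -/
/-- `w` contains the pattern `p` (both given in one-line notation):
there is a subsequence of `w` whose entries are in the same relative order
as the entries of `p`. -/
def ContainsPattern (w p : List ℕ) : Prop :=
  ∃ s : List ℕ, s.Sublist w ∧ s.length = p.length ∧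
    ∀ a b : ℕ, a < p.length → b < p.length →
      (s.getD a 0 < s.getD b 0 ↔ p.getD a 0 < p.getD b 0)

/-- `w` avoids the pattern `p`. -/
def Avoids (w p : List ℕ) : Prop := ¬ ContainsPattern w p

/-- `w` is the one-line notation of a permutation of `{1, …, n}`. -/
def IsPermList (n : ℕ) (w : List ℕ) : Prop := w.Perm (List.range' 1 n)

/-- A permutation is rectangular if it avoids 2413, 2431, 4213 and 4231. -/
def Rectangular (w : List ℕ) : Prop :=
  Avoids w [2,4,1,3] ∧ Avoids w [2,4,3,1] ∧ Avoids w [4,2,1,3] ∧ Avoids w [4,2,3,1]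

/-- A permutation is evil-avoiding if it avoids 2413, 4132, 4213 and 3214. -/
def EvilAvoiding (w : List ℕ) : Prop :=
  Avoids w [2,4,1,3] ∧ Avoids w [4,1,3,2] ∧ Avoids w [4,2,1,3] ∧ Avoids w [3,2,1,4]

/-- The number of recoils of `w`: the number of values `i ∈ {1,…,n-1}`
that occur after `i+1` in the one-line notation `w`. -/
def recoils (w : List ℕ) : ℕ :=
  ((Finset.Icc 1 (w.length - 1)).filter (fun i => w.idxOf (i+1) < w.idxOf i)).card

/-- The insertion operator ρ_{i,j} (with 1-indexed position `j`): increment by 1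
every value of `w` that is ≥ i, then insert the value `i` in position `j`. -/
def insOp (i j : ℕ) (w : List ℕ) : List ℕ :=
  List.insertIdx (w.map (fun v => if i ≤ v then v + 1 else v)) (j-1) i

def Cond (a b c d : ℕ) : Prop :=
  max c d < max a b ∧ min a b < max c d ∧ min c d < min a b

def Bad (u : List ℕ) : Prop :=
  ∃ a b c d : ℕ, [a,b,c,d].Sublist u ∧ Cond a b c d

lemma bad_of_contains (u p : List ℕ)
    (hp : p = [2,4,1,3] ∨ p = [2,4,3,1] ∨ p = [4,2,1,3] ∨ p = [4,2,3,1])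
    (h : ContainsPattern u p) : Bad u := by
  obtain ⟨s, hs, hlen, hiff⟩ := h
  have hplen : p.length = 4 := by rcases hp with rfl|rfl|rfl|rfl <;> rfl
  rw [hplen] at hlen hiff
  match s, hlen with
  | [a,b,c,d], _ =>
    refine ⟨a,b,c,d, hs, ?_⟩
    have h01 := hiff 0 1 (by norm_num) (by norm_num)
    have h02 := hiff 0 2 (by norm_num) (by norm_num)
    have h03 := hiff 0 3 (by norm_num) (by norm_num)
    have h12 := hiff 1 2 (by norm_num) (by norm_num)
    have h13 := hiff 1 3 (by norm_num) (by norm_num)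
    have h23 := hiff 2 3 (by norm_num) (by norm_num)
    have h10 := hiff 1 0 (by norm_num) (by norm_num)
    have h20 := hiff 2 0 (by norm_num) (by norm_num)
    have h30 := hiff 3 0 (by norm_num) (by norm_num)
    have h21 := hiff 2 1 (by norm_num) (by norm_num)
    have h31 := hiff 3 1 (by norm_num) (by norm_num)
    have h32 := hiff 3 2 (by norm_num) (by norm_num)
    unfold Cond
    rcases hp with rfl|rfl|rfl|rfl <;>
      [skip; skip; skip; skip] <;>
      simp at h01 h02 h03 h12 h13 h23 h10 h20 h30 h21 h31 h32 <;> omega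

lemma not_rect_of_bad (u : List ℕ) (h : Bad u) : ¬ Rectangular u := by
  obtain ⟨a,b,c,d,hs,hc⟩ := h
  unfold Cond at hc
  rintro ⟨h1,h2,h3,h4⟩
  rcases lt_or_ge a b with hab|hab <;> rcases lt_or_ge c d with hcd|hcd
  · refine h1 ⟨[a,b,c,d], hs, rfl, ?_⟩
    intro x y hx hy
    have hx' : x < 4 := by simpa using hx
    have hy' : y < 4 := by simpa using hy
    interval_cases x <;> interval_cases y <;> simp <;> omega
  · refine h2 ⟨[a,b,c,d], hs, rfl, ?_⟩
    intro x y hx hy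
    have hx' : x < 4 := by simpa using hx
    have hy' : y < 4 := by simpa using hy
    interval_cases x <;> interval_cases y <;> simp <;> omega
  · refine h3 ⟨[a,b,c,d], hs, rfl, ?_⟩
    intro x y hx hy
    have hx' : x < 4 := by simpa using hx
    have hy' : y < 4 := by simpa using hy
    interval_cases x <;> interval_cases y <;> simp <;> omega
  · refine h4 ⟨[a,b,c,d], hs, rfl, ?_⟩
    intro x y hx hy
    have hx' : x < 4 := by simpa using hx
    have hy' : y < 4 := by simpa using hy
    interval_cases x <;> interval_cases y <;> simp <;> omega

lemma rect_of_not_bad (u : List ℕ) (h : ¬ Bad u) : Rectangular u :=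
  ⟨fun hc => h (bad_of_contains u _ (by tauto) hc),
   fun hc => h (bad_of_contains u _ (by tauto) hc),
   fun hc => h (bad_of_contains u _ (by tauto) hc),
   fun hc => h (bad_of_contains u _ (by tauto) hc)⟩

lemma bad_map {f : ℕ → ℕ} (hf : StrictMono f) (w : List ℕ) (h : Bad (w.map f)) : Bad w := by
  obtain ⟨a,b,c,d,hs,hc⟩ := h
  rw [List.sublist_map_iff] at hs
  obtain ⟨l, hl, he⟩ := hs
  have hlen : l.length = 4 := by
    have := congrArg List.length he
    simpa using this.symm
  match l, hlen with
  | [a',b',c',d'], _ =>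
    simp only [List.map_cons, List.map_nil, List.cons.injEq, and_true] at he
    obtain ⟨ha, hb, hc', hd⟩ := he
    subst ha hb hc' hd
    refine ⟨a',b',c',d', hl, ?_⟩
    unfold Cond at hc ⊢
    rw [← hf.monotone.map_max, ← hf.monotone.map_max, ← hf.monotone.map_min,
      ← hf.monotone.map_min, hf.lt_iff_lt, hf.lt_iff_lt, hf.lt_iff_lt] at hc
    exact hc

lemma bad_cons_adj {i y : ℕ} (hadj : y = i + 1 ∨ i = y + 1) {L : List ℕ}
    (hi : i ∉ L) (hy : y ∉ L) (h : Bad (i :: y :: L)) : Bad (y :: L) := by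
  obtain ⟨a,b,c,d,hs,hc⟩ := h
  cases hs with
  | cons _ h => exact ⟨a,b,c,d,h,hc⟩
  | cons_cons _ h =>
    cases h with
    | cons_cons _ h =>
      exfalso; unfold Cond at hc; omega
    | cons _ h =>
      have hbm : b ∈ L := h.mem (by simp)
      have hcm : c ∈ L := h.mem (by simp)
      have hdm : d ∈ L := h.mem (by simp)
      refine ⟨y, b, c, d, h.cons₂ y, ?_⟩
      have hb1 : b ≠ i := fun e => hi (e ▸ hbm)
      have hb2 : b ≠ y := fun e => hy (e ▸ hbm)
      have hc1 : c ≠ i := fun e => hi (e ▸ hcm)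
      have hc2 : c ≠ y := fun e => hy (e ▸ hcm)
      have hd1 : d ≠ i := fun e => hi (e ▸ hdm)
      have hd2 : d ≠ y := fun e => hy (e ▸ hdm)
      unfold Cond at hc ⊢
      omega

lemma insOp_strictMono_aux (i : ℕ) : StrictMono (fun v => if i ≤ v then v + 1 else v) := by
  intro p q h
  dsimp only
  split <;> split <;> omega

lemma bad_insOp_front {x : ℕ} {t : List ℕ} (hxnt : x ∉ t) {i : ℕ}
    (hi : i = x ∨ i = x + 1) (hb : Bad (insOp i 1 (x :: t))) : Bad (x :: t) := by
  have hmem : ∀ y, y = x ∨ y = x + 1 → y ∉ t.map (fun v => if i ≤ v then v + 1 else v) := by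
    intro y hy hm
    rw [List.mem_map] at hm
    obtain ⟨v, hv, hev⟩ := hm
    by_cases hiv : i ≤ v
    · rw [if_pos hiv] at hev
      have hvx : v = x := by omega
      exact hxnt (hvx ▸ hv)
    · rw [if_neg hiv] at hev
      have hvx : v = x := by omega
      exact hxnt (hvx ▸ hv)
  have he : insOp i 1 (x :: t) =
      i :: (if i ≤ x then x + 1 else x) :: t.map (fun v => if i ≤ v then v + 1 else v) := by simp [insOp]
  rw [he] at hb
  rcases hi with rfl | rfl
  · rw [if_pos le_rfl] at hb
    have hb2 := bad_cons_adj (Or.inl rfl) (hmem i (Or.inl rfl)) (hmem (i+1) (Or.inr rfl)) hb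
    have hmc : ((i + 1) :: t.map (fun v => if i ≤ v then v + 1 else v)) =
        (i :: t).map (fun v => if i ≤ v then v + 1 else v) := by simp
    rw [hmc] at hb2
    exact bad_map (insOp_strictMono_aux i) _ hb2
  · rw [if_neg (by omega)] at hb
    have hb2 := bad_cons_adj (Or.inr rfl) (hmem (x+1) (Or.inr rfl)) (hmem x (Or.inl rfl)) hb
    have hmc : (x :: t.map (fun v => if x + 1 ≤ v then v + 1 else v)) =
        (x :: t).map (fun v => if x + 1 ≤ v then v + 1 else v) := by simp
    rw [hmc] at hb2
    exact bad_map (insOp_strictMono_aux (x + 1)) _ hb2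


/-- If `π` is a rectangular permutation in `S_n`, then `ρ_{1,1}(π)` and `ρ_{1,2}(π)`
are rectangular, and if `n ≥ 1` then `ρ_{π₁,1}(π)` and `ρ_{π₁+1,1}(π)` are
rectangular, where `π₁ = w.headI` is the first value of `π`. -/
theorem insOp_rectangular (n : ℕ) (w : List ℕ) (hperm : IsPermList n w)
    (hrect : Rectangular w) :
    Rectangular (insOp 1 1 w) ∧ Rectangular (insOp 1 2 w) ∧
      (1 ≤ n → Rectangular (insOp w.headI 1 w) ∧ Rectangular (insOp (w.headI + 1) 1 w)) := by
  have hnodup : w.Nodup := hperm.nodup_iff.mpr (List.nodup_range' 1)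
  have hpos : ∀ v ∈ w, 1 ≤ v := by
    intro v hv
    have h := hperm.mem_iff.mp hv
    rw [List.mem_range'_1] at h
    omega
  have hnbw : ¬ Bad w := fun hb => not_rect_of_bad w hb hrect
  have hpos2 : ∀ c ∈ w.map (fun v => if 1 ≤ v then v + 1 else v), 2 ≤ c := by
    intro c hm
    rw [List.mem_map] at hm
    obtain ⟨v, hv, hev⟩ := hm
    have h1 := hpos v hv
    rw [if_pos h1] at hev
    omega
  refine ⟨?_, ?_, fun _hn => ?_⟩
  · apply rect_of_not_bad
    intro hb
    have he : insOp 1 1 w = 1 :: w.map (fun v => if 1 ≤ v then v + 1 else v) := by simp [insOp]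
    rw [he] at hb
    obtain ⟨a,b,c,d,hs,hcnd⟩ := hb
    cases hs with
    | cons _ h => exact hnbw (bad_map (insOp_strictMono_aux 1) w ⟨a,b,c,d,h,hcnd⟩)
    | cons_cons _ h =>
      have hc2 := hpos2 c (h.mem (by simp))
      have hd2 := hpos2 d (h.mem (by simp))
      unfold Cond at hcnd
      omega
  · cases w with
    | nil =>
      apply rect_of_not_bad
      rintro ⟨a,b,c,d,hs,-⟩
      simp [insOp] at hs
    | cons x t =>
      apply rect_of_not_bad
      intro hb
      have he : insOp 1 2 (x :: t) =
          (if (1:ℕ) ≤ x then x + 1 else x) :: 1 :: t.map (fun v => if 1 ≤ v then v + 1 else v) := by simp [insOp]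
      rw [he] at hb
      have hmapcons :
          ((if (1:ℕ) ≤ x then x + 1 else x) :: t.map (fun v => if 1 ≤ v then v + 1 else v))
          = (x :: t).map (fun v => if 1 ≤ v then v + 1 else v) := rfl
      have hmem' : ∀ c ∈ t.map (fun v => if 1 ≤ v then v + 1 else v), 2 ≤ c := by
        intro c hcm
        apply hpos2
        rw [List.map_cons]
        exact List.mem_cons_of_mem _ hcm
      obtain ⟨a,b,c,d,hs,hcnd⟩ := hb
      cases hs with
      | cons _ h =>
        cases h with
        | cons _ h =>
          refine hnbw (bad_map (insOp_strictMono_aux 1) _ ⟨a,b,c,d, ?_, hcnd⟩)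
          rw [← hmapcons]
          exact h.trans (List.sublist_cons_self _ _)
        | cons_cons _ h =>
          have hc2 := hmem' c (h.mem (by simp))
          have hd2 := hmem' d (h.mem (by simp))
          unfold Cond at hcnd
          omega
      | cons_cons _ h =>
        cases h with
        | cons _ h =>
          refine hnbw (bad_map (insOp_strictMono_aux 1) _ ⟨_,b,c,d, ?_, hcnd⟩)
          rw [← hmapcons]
          exact h.cons₂ _
        | cons_cons _ h =>
          have hc2 := hmem' c (h.mem (by simp))
          have hd2 := hmem' d (h.mem (by simp))
          unfold Cond at hcnd
          omega
  · have hlw : w.length = n := by simpa using hperm.length_eq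
    cases w with
    | nil => simp at hlw; omega
    | cons x t =>
      obtain ⟨hxnt, -⟩ := List.nodup_cons.mp hnodup
      constructor
      · exact rect_of_not_bad _ fun hb => hnbw (bad_insOp_front hxnt (Or.inl rfl) hb)
      · exact rect_of_not_bad _ fun hb => hnbw (bad_insOp_front hxnt (Or.inr rfl) hb)
end

section
/- Every rectangular permutation π ∈ S_n with n ≥ 2 satisfies at least one of the following: π_1 = 1, or π_2 = 1, or |π_1 − π_2| = 1, where π_1 and π_2 are the first two values of π in one-line notation. -/
lemma pair_sublist {x y : ℕ} : ∀ {t : List ℕ}, x ∈ t → y ∈ t → x ≠ y →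
    [x, y].Sublist t ∨ [y, x].Sublist t := by
  intro t
  induction t with
  | nil => simp
  | cons h t ih =>
    intro hx hy hxy
    rcases List.mem_cons.1 hx with rfl | hx'
    · have hy' : y ∈ t := by
        rcases List.mem_cons.1 hy with rfl | hy'
        · exact absurd rfl hxy
        · exact hy'
      exact Or.inl ((List.singleton_sublist.2 hy').cons₂ x)
    · rcases List.mem_cons.1 hy with rfl | hy'
      · exact Or.inr ((List.singleton_sublist.2 hx').cons₂ y)
      · rcases ih hx' hy' hxy with h1 | h1
        · exact Or.inl (h1.cons h)
        · exact Or.inr (h1.cons h)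

/-- Every rectangular permutation `π ∈ S_n` with `n ≥ 2` satisfies `π₁ = 1`, or
`π₂ = 1`, or `|π₁ − π₂| = 1`, where `π₁, π₂` are its first two values. -/
theorem rectangular_first_two (n : ℕ) (hn : 2 ≤ n) (w : List ℕ)
    (hperm : IsPermList n w) (hrect : Rectangular w) :
    w.getD 0 0 = 1 ∨ w.getD 1 0 = 1 ∨
      ((w.getD 0 0 : ℤ) - (w.getD 1 0 : ℤ)).natAbs = 1 := by
  by_contra hcon
  push_neg at hcon
  obtain ⟨h1, h2, h3⟩ := hcon
  have hlen : w.length = n := by simpa using hperm.length_eq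
  obtain ⟨a, b, t, rfl⟩ : ∃ a b t, w = a :: b :: t := by
    match w, hlen with
    | [], h => simp at h; omega
    | [x], h => simp at h; omega
    | x :: y :: t, _ => exact ⟨x, y, t, rfl⟩
  simp only [List.getD_cons_zero, List.getD_cons_succ] at h1 h2 h3
  have hmem : ∀ v, v ∈ a :: b :: t ↔ 1 ≤ v ∧ v ≤ n := by
    intro v
    rw [hperm.mem_iff, List.mem_range'_1]
    omega
  have hnd : (a :: b :: t).Nodup := hperm.nodup_iff.2 List.nodup_range'
  have ha : 1 ≤ a ∧ a ≤ n := (hmem a).1 (by simp)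
  have hb : 1 ≤ b ∧ b ≤ n := (hmem b).1 (by simp)
  have hab : a ≠ b := by
    intro h; exact (List.nodup_cons.1 hnd).1 (h ▸ (List.mem_cons_self : b ∈ b :: t))
  have habs : a + 2 ≤ b ∨ b + 2 ≤ a := by omega
  rcases habs with hlt | hlt
  · -- a < b, use values 1 and a+1
    have h1t : (1 : ℕ) ∈ t := by
      have := (hmem 1).2 ⟨le_refl 1, by omega⟩
      simp only [List.mem_cons] at this
      rcases this with h | h | h
      · omega
      · omega
      · exact h
    have hat : a + 1 ∈ t := by
      have := (hmem (a+1)).2 ⟨by omega, by omega⟩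
      simp only [List.mem_cons] at this
      rcases this with h | h | h
      · omega
      · omega
      · exact h
    rcases pair_sublist h1t hat (by omega) with hs | hs
    · exact hrect.1 ⟨[a, b, 1, a+1], (hs.cons₂ b).cons₂ a, rfl, by
        intro i j hi hj
        simp only [List.length_cons, List.length_nil] at hi hj
        interval_cases i <;> interval_cases j <;> simp [List.getD] <;> omega⟩
    · exact hrect.2.1 ⟨[a, b, a+1, 1], (hs.cons₂ b).cons₂ a, rfl, by
        intro i j hi hj
        simp only [List.length_cons, List.length_nil] at hi hj
        interval_cases i <;> interval_cases j <;> simp [List.getD] <;> omega⟩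
  · -- b < a, use values 1 and b+1
    have h1t : (1 : ℕ) ∈ t := by
      have := (hmem 1).2 ⟨le_refl 1, by omega⟩
      simp only [List.mem_cons] at this
      rcases this with h | h | h
      · omega
      · omega
      · exact h
    have hbt : b + 1 ∈ t := by
      have := (hmem (b+1)).2 ⟨by omega, by omega⟩
      simp only [List.mem_cons] at this
      rcases this with h | h | h
      · omega
      · omega
      · exact h
    rcases pair_sublist h1t hbt (by omega) with hs | hs
    · exact hrect.2.2.1 ⟨[a, b, 1, b+1], (hs.cons₂ b).cons₂ a, rfl, by
        intro i j hi hj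
        simp only [List.length_cons, List.length_nil] at hi hj
        interval_cases i <;> interval_cases j <;> simp [List.getD] <;> omega⟩
    · exact hrect.2.2.2 ⟨[a, b, b+1, 1], (hs.cons₂ b).cons₂ a, rfl, by
        intro i j hi hj
        simp only [List.length_cons, List.length_nil] at hi hj
        interval_cases i <;> interval_cases j <;> simp [List.getD] <;> omega⟩
end

section
/- For n ≥ 1, every rectangular permutation π ∈ S_n can be written in exactly one of the following four forms, with σ a rectangular permutation in S_{n−1} (and σ is uniquely determined in each case): (a) π = ρ_{1,1}(σ); (b) π = ρ_{1,2}(σ) with σ_1 ≠ 1; (c) π = ρ_{σ_1,1}(σ) with σ_1 ≠ 1; (d) π = ρ_{σ_1+1,1}(σ); here σ_1 denotes the first value of σ in one-line notation. -/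
/-- decrement values above `i` -/
def dec (i v : ℕ) : ℕ := if i < v then v - 1 else v

lemma dec_inc (i v : ℕ) : dec i (if i ≤ v then v + 1 else v) = v := by
  unfold dec; split_ifs <;> omega

lemma map_dec_inc (i : ℕ) (u : List ℕ) :
    (u.map (fun v => if i ≤ v then v + 1 else v)).map (dec i) = u := by
  rw [List.map_map]
  conv_rhs => rw [← List.map_id u]
  exact List.map_congr_left (fun a _ => dec_inc i a)

lemma inc_dec (i v : ℕ) (h : v ≠ i) : (if i ≤ dec i v then dec i v + 1 else dec i v) = v := by
  unfold dec; split_ifs <;> omega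

lemma map_inc_dec {i : ℕ} {u : List ℕ} (h : i ∉ u) :
    (u.map (dec i)).map (fun v => if i ≤ v then v + 1 else v) = u := by
  rw [List.map_map]
  conv_rhs => rw [← List.map_id u]
  exact List.map_congr_left (fun a ha => inc_dec i a (fun hv => h (hv ▸ ha)))

lemma dec_lt_dec {i x y : ℕ} (hx : x ≠ i) (hy : y ≠ i) : dec i x < dec i y ↔ x < y := by
  unfold dec; split_ifs <;> omega

lemma insOp_one (i : ℕ) (l : List ℕ) :
    insOp i 1 l = i :: l.map (fun v => if i ≤ v then v + 1 else v) := by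
  simp [insOp]

lemma insOp_two (i c : ℕ) (u : List ℕ) :
    insOp i 2 (c :: u) = (if i ≤ c then c + 1 else c) :: i ::
      u.map (fun v => if i ≤ v then v + 1 else v) := by
  simp [insOp]

lemma perm_dec {n i : ℕ} (h1 : 1 ≤ i) (h2 : i ≤ n) {u : List ℕ}
    (hu : u.Perm ((List.range' 1 n).erase i)) :
    (u.map (dec i)).Perm (List.range' 1 (n - 1)) := by
  have hnd : ((List.range' 1 n).erase i).Nodup := (List.nodup_range' (s := 1) (n := n)).erase i
  have hmem : ∀ x, x ∈ (List.range' 1 n).erase i ↔ (1 ≤ x ∧ x < 1 + n ∧ x ≠ i) := by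
    intro x
    rw [(List.nodup_range' (s := 1) (n := n)).mem_erase_iff, List.mem_range'_1]
    tauto
  refine (hu.map (dec i)).trans ?_
  rw [List.perm_ext_iff_of_nodup ?nd (List.nodup_range' (s := 1) (n := n-1))]
  case nd =>
    refine hnd.map_on ?_
    intro x hx y hy hxy
    rw [hmem] at hx hy
    unfold dec at hxy; split_ifs at hxy <;> omega
  intro a
  simp only [List.mem_map, hmem, List.mem_range'_1]
  constructor
  · rintro ⟨v, ⟨hv1, hv2, hv3⟩, rfl⟩
    unfold dec; split_ifs <;> omega
  · rintro ⟨ha1, ha2⟩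
    refine ⟨if a < i then a else a + 1, by constructor <;> [skip; constructor] <;> split_ifs <;> omega, ?_⟩
    unfold dec; split_ifs <;> omega

lemma avoids_map_dec {w u : List ℕ} {i : ℕ} (hsub : u.Sublist w) (hi : i ∉ u)
    {p : List ℕ} (hw : Avoids w p) : Avoids (u.map (dec i)) p := by
  intro hc
  apply hw
  obtain ⟨s, hs, hlen, hord⟩ := hc
  obtain ⟨s', hs', rfl⟩ := List.sublist_map_iff.mp hs
  rw [List.length_map] at hlen
  refine ⟨s', hs'.trans hsub, hlen, ?_⟩
  intro a b ha hb
  rw [← hord a b ha hb]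
  have ha' : a < s'.length := hlen ▸ ha
  have hb' : b < s'.length := hlen ▸ hb
  rw [List.getD_eq_getElem _ _ ha', List.getD_eq_getElem _ _ hb',
    List.getD_eq_getElem _ _ (by simpa using ha'), List.getD_eq_getElem _ _ (by simpa using hb'),
    List.getElem_map, List.getElem_map]
  rw [dec_lt_dec]
  · exact fun h => hi (hs'.subset (h ▸ List.getElem_mem ha'))
  · exact fun h => hi (hs'.subset (h ▸ List.getElem_mem hb'))

lemma rect_map_dec {w u : List ℕ} {i : ℕ} (hsub : u.Sublist w) (hi : i ∉ u)
    (hw : Rectangular w) : Rectangular (u.map (dec i)) :=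
  ⟨avoids_map_dec hsub hi hw.1, avoids_map_dec hsub hi hw.2.1,
   avoids_map_dec hsub hi hw.2.2.1, avoids_map_dec hsub hi hw.2.2.2⟩

lemma pair_sublist_s8 {x y : ℕ} {l : List ℕ} (hx : x ∈ l) (hy : y ∈ l) (hxy : x ≠ y) :
    [x, y].Sublist l ∨ [y, x].Sublist l := by
  induction l with
  | nil => cases hx
  | cons c l ih =>
    rcases List.mem_cons.mp hx with rfl | hx'
    · left
      exact List.cons_sublist_cons.mpr (List.singleton_sublist.mpr
        ((List.mem_cons.mp hy).resolve_left (fun h => hxy h.symm)))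
    · rcases List.mem_cons.mp hy with rfl | hy'
      · right
        exact List.cons_sublist_cons.mpr (List.singleton_sublist.mpr hx')
      · rcases ih hx' hy' with h | h
        · exact Or.inl (h.cons c)
        · exact Or.inr (h.cons c)

lemma contains_of_four {w : List ℕ} {p q r s : ℕ} (hsub : [p,q,r,s].Sublist w)
    {pat : List ℕ} (hlen : pat.length = 4)
    (hord : ∀ a b : ℕ, a < 4 → b < 4 →
      (([p,q,r,s].getD a 0 < [p,q,r,s].getD b 0) ↔ (pat.getD a 0 < pat.getD b 0))) :
    ContainsPattern w pat :=
  ⟨[p,q,r,s], hsub, by simp [hlen], by rw [hlen]; exact hord⟩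

lemma struct {n : ℕ} {a b : ℕ} {r : List ℕ}
    (hperm : (a :: b :: r).Perm (List.range' 1 n))
    (hrect : Rectangular (a :: b :: r)) (ha : a ≠ 1) :
    b = 1 ∨ b = a + 1 ∨ b + 1 = a := by
  by_contra hcon
  push_neg at hcon
  obtain ⟨hb1, hb2, hb3⟩ := hcon
  have hnd : (a :: b :: r).Nodup := hperm.nodup_iff.mpr (List.nodup_range' (s := 1) (n := n))
  have hab : a ≠ b := by
    intro h; exact (List.nodup_cons.mp hnd).1 (h ▸ List.mem_cons_self (a := b) (l := r))
  have haw : a ∈ List.range' 1 n := hperm.subset (List.mem_cons_self (a := a) (l := _))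
  have hbw : b ∈ List.range' 1 n := hperm.subset (by simp)
  rw [List.mem_range'_1] at haw hbw
  -- both a and b are ≥ 2, and they differ by at least 2
  have ha2 : 2 ≤ a := by omega
  have hb2' : 2 ≤ b := by omega
  set m := min a b with hm
  have hmem1 : (1 : ℕ) ∈ r := by
    have : (1 : ℕ) ∈ a :: b :: r := hperm.mem_iff.mpr (by rw [List.mem_range'_1]; omega)
    simp only [List.mem_cons] at this
    rcases this with h | h | h
    · omega
    · omega
    · exact h
  have hmemm : m + 1 ∈ r := by
    have : m + 1 ∈ a :: b :: r := hperm.mem_iff.mpr (by rw [List.mem_range'_1]; omega)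
    simp only [List.mem_cons] at this
    rcases this with h | h | h
    · omega
    · omega
    · exact h
  rcases pair_sublist_s8 hmem1 hmemm (by omega) with hp | hp
  · -- [1, m+1] appears in r
    rcases Nat.lt_or_ge a b with hlt | hge
    · -- a < b : pattern 2413 with [a, b, 1, a+1]
      have hma : m = a := by omega
      rw [hma] at hp
      exact hrect.1 (contains_of_four
        (List.cons_sublist_cons.mpr (List.cons_sublist_cons.mpr hp)) rfl
        (by intro x y hx hy; interval_cases x <;> interval_cases y <;>
            simp [List.getD] <;> omega))
    · -- b < a : pattern 4213 with [a, b, 1, b+1]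
      have hmb : m = b := by omega
      rw [hmb] at hp
      exact hrect.2.2.1 (contains_of_four
        (List.cons_sublist_cons.mpr (List.cons_sublist_cons.mpr hp)) rfl
        (by intro x y hx hy; interval_cases x <;> interval_cases y <;>
            simp [List.getD] <;> omega))
  · -- [m+1, 1] appears in r
    rcases Nat.lt_or_ge a b with hlt | hge
    · -- a < b : pattern 2431 with [a, b, a+1, 1]
      have hma : m = a := by omega
      rw [hma] at hp
      exact hrect.2.1 (contains_of_four
        (List.cons_sublist_cons.mpr (List.cons_sublist_cons.mpr hp)) rfl
        (by intro x y hx hy; interval_cases x <;> interval_cases y <;>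
            simp [List.getD] <;> omega))
    · -- b < a : pattern 4231 with [a, b, b+1, 1]
      have hmb : m = b := by omega
      rw [hmb] at hp
      exact hrect.2.2.2 (contains_of_four
        (List.cons_sublist_cons.mpr (List.cons_sublist_cons.mpr hp)) rfl
        (by intro x y hx hy; interval_cases x <;> interval_cases y <;>
            simp [List.getD] <;> omega))

lemma extract {n : ℕ} (hn : 1 ≤ n) {w : List ℕ} (hw : IsPermList n w)
    (k : Fin 4) (σ : List ℕ) (h1 : IsPermList (n - 1) σ)
    (h3 : (k = 0 ∧ w = insOp 1 1 σ) ∨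
          (k = 1 ∧ σ.headI ≠ 1 ∧ w = insOp 1 2 σ) ∨
          (k = 2 ∧ σ ≠ [] ∧ σ.headI ≠ 1 ∧ w = insOp σ.headI 1 σ) ∨
          (k = 3 ∧ σ ≠ [] ∧ w = insOp (σ.headI + 1) 1 σ)) :
    (k = 0 ∧ w.headI = 1 ∧ σ = (w.tail).map (dec 1)) ∨
    (k = 1 ∧ 3 ≤ w.headI ∧ w.tail.headI = 1 ∧ σ = ((w.eraseIdx 1).map (dec 1))) ∨
    (k = 2 ∧ 2 ≤ w.headI ∧ w.tail.headI = w.headI + 1 ∧ σ = (w.tail).map (dec w.headI)) ∨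
    (k = 3 ∧ 2 ≤ w.headI ∧ w.tail.headI + 1 = w.headI ∧ σ = (w.tail).map (dec w.headI)) := by
  have hwne : w ≠ [] := by
    intro h
    have := hw.length_eq
    rw [h] at this
    simp [List.length_range'] at this
    omega
  have hσmem : ∀ c u, σ = c :: u → 1 ≤ c := by
    rintro c u rfl
    have : c ∈ List.range' 1 (n-1) := h1.subset (List.mem_cons_self (a := c) (l := u))
    rw [List.mem_range'_1] at this
    omega
  rcases h3 with ⟨hk, heq⟩ | ⟨hk, hh, heq⟩ | ⟨hk, hne, hh, heq⟩ | ⟨hk, hne, heq⟩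
  · refine Or.inl ⟨hk, ?_, ?_⟩
    · rw [heq, insOp_one]; rfl
    · rw [heq, insOp_one]
      simp only [List.tail_cons]
      rw [map_dec_inc]
  · rcases σ with _ | ⟨c, u⟩
    · exfalso; apply hwne; rw [heq]; simp [insOp]
    · have hc1 : 1 ≤ c := hσmem c u rfl
      have hc2 : 2 ≤ c := by
        simp only [List.headI] at hh; omega
      rw [insOp_two, if_pos hc1] at heq
      refine Or.inr (Or.inl ⟨hk, ?_, ?_, ?_⟩)
      · rw [heq]; simp; omega
      · rw [heq]; rfl
      · rw [heq]
        simp only [List.eraseIdx]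
        rw [List.map_cons, map_dec_inc]
        unfold dec
        rw [if_pos (by omega)]
        congr 1

  · rcases σ with _ | ⟨c, u⟩
    · exact absurd rfl hne
    · have hc1 : 1 ≤ c := hσmem c u rfl
      have hc2 : 2 ≤ c := by
        simp only [List.headI] at hh; omega
      simp only [List.headI] at heq
      rw [insOp_one, List.map_cons, if_pos (le_refl c)] at heq
      refine Or.inr (Or.inr (Or.inl ⟨hk, ?_, ?_, ?_⟩))
      · rw [heq]; simpa using hc2
      · rw [heq]; rfl
      · rw [heq]
        simp only [List.tail_cons, List.headI, List.map_cons, map_dec_inc]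
        unfold dec
        rw [if_pos (by omega)]
        congr 1

  · rcases σ with _ | ⟨c, u⟩
    · exact absurd rfl hne
    · have hc1 : 1 ≤ c := hσmem c u rfl
      simp only [List.headI] at heq
      rw [insOp_one, List.map_cons, if_neg (by omega)] at heq
      refine Or.inr (Or.inr (Or.inr ⟨hk, ?_, ?_, ?_⟩))
      · rw [heq]; simp; omega
      · rw [heq]; rfl
      · rw [heq]
        simp only [List.tail_cons, List.headI, List.map_cons, map_dec_inc]
        unfold dec
        rw [if_neg (by omega)]


/-- For `n ≥ 1`, every rectangular permutation `π ∈ S_n` can be written in exactly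
one of the following four forms, with `σ` a rectangular permutation in `S_{n-1}`
which is uniquely determined in each case:
(a) `π = ρ_{1,1}(σ)`; (b) `π = ρ_{1,2}(σ)` with `σ₁ ≠ 1`;
(c) `π = ρ_{σ₁,1}(σ)` with `σ₁ ≠ 1`; (d) `π = ρ_{σ₁+1,1}(σ)`
(here `σ₁` is the first value of `σ`, so in cases (c), (d) `σ` is nonempty). -/
theorem rectangular_unique_factorization (n : ℕ) (hn : 1 ≤ n) (w : List ℕ)
    (hperm : IsPermList n w) (hrect : Rectangular w) :
    ∃! x : Fin 4 × List ℕ,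
      IsPermList (n - 1) x.2 ∧ Rectangular x.2 ∧
        ((x.1 = 0 ∧ w = insOp 1 1 x.2) ∨
         (x.1 = 1 ∧ x.2.headI ≠ 1 ∧ w = insOp 1 2 x.2) ∨
         (x.1 = 2 ∧ x.2 ≠ [] ∧ x.2.headI ≠ 1 ∧ w = insOp x.2.headI 1 x.2) ∨
         (x.1 = 3 ∧ x.2 ≠ [] ∧ w = insOp (x.2.headI + 1) 1 x.2)) := by
  apply existsUnique_of_exists_of_unique
  · -- existence
    have hlen : w.length = n := by simpa using hperm.length_eq
    rcases w with _ | ⟨a, t⟩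
    · simp at hlen; omega
    have hnd : (a :: t).Nodup := hperm.nodup_iff.mpr (List.nodup_range' (s := 1) (n := n))
    have hat : a ∉ t := (List.nodup_cons.mp hnd).1
    have haw : a ∈ List.range' 1 n := hperm.subset (List.mem_cons_self (a := a) (l := t))
    rw [List.mem_range'_1] at haw
    have htperm : t.Perm ((List.range' 1 n).erase a) :=
      (hperm.trans (List.perm_cons_erase (by rw [List.mem_range'_1]; omega))).cons_inv
    by_cases ha : a = 1
    · subst ha
      refine ⟨(0, t.map (dec 1)), perm_dec le_rfl (by omega) htperm,
        rect_map_dec (List.sublist_cons_self 1 t) hat hrect,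
        Or.inl ⟨rfl, ?_⟩⟩
      rw [insOp_one, map_inc_dec hat]
    · have htne : t ≠ [] := by
        intro h
        subst h
        simp at hlen
        omega
      rcases t with _ | ⟨b, r⟩
      · exact absurd rfl htne
      by_cases hd : b + 1 = a
      · -- case (d)
        refine ⟨(3, (b :: r).map (dec a)), perm_dec (by omega) (by omega) htperm,
          rect_map_dec (List.sublist_cons_self a _) hat hrect,
          Or.inr (Or.inr (Or.inr ⟨rfl, by simp, ?_⟩))⟩
        have hh : (((b :: r).map (dec a))).headI = b := by
          simp only [List.map_cons, List.headI, dec]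
          rw [if_neg (by omega)]
        rw [hh, hd, insOp_one, map_inc_dec hat]
      · rcases struct hperm hrect ha with hb | hb | hb
        · -- case (b) : b = 1, a ≥ 3
          subst hb
          have ha3 : 3 ≤ a := by omega
          have h1r : (1:ℕ) ∉ r := (List.nodup_cons.mp (List.nodup_cons.mp hnd).2).1
          have hu1 : (1:ℕ) ∉ a :: r := by
            simp only [List.mem_cons]
            push_neg
            exact ⟨fun h => ha h.symm, h1r⟩
          have husub : (a :: r).Sublist (a :: 1 :: r) :=
            List.cons_sublist_cons.mpr (List.sublist_cons_self 1 r)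
          have huperm : (a :: r).Perm ((List.range' 1 n).erase 1) := by
            have hsw : (1 :: a :: r).Perm (a :: 1 :: r) := List.Perm.swap a 1 r
            exact (hsw.trans (hperm.trans (List.perm_cons_erase
              (by rw [List.mem_range'_1]; omega)))).cons_inv
          refine ⟨(1, (a :: r).map (dec 1)), perm_dec le_rfl (by omega) huperm,
            rect_map_dec husub hu1 hrect, Or.inr (Or.inl ⟨rfl, ?_, ?_⟩)⟩
          · simp only [List.map_cons, List.headI, dec]
            rw [if_pos (by omega)]
            omega
          · simp only [insOp, map_inc_dec hu1]
            simp [List.insertIdx]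
        · -- case (c) : b = a + 1
          subst hb
          have hh : ((((a + 1) :: r)).map (dec a)).headI = a := by
            simp only [List.map_cons, List.headI, dec]
            rw [if_pos (by omega)]; omega
          refine ⟨(2, ((a+1) :: r).map (dec a)), perm_dec (by omega) (by omega) htperm,
            rect_map_dec (List.sublist_cons_self a _) hat hrect,
            Or.inr (Or.inr (Or.inl ⟨rfl, by simp, ?_, ?_⟩))⟩
          · rw [hh]; omega
          · rw [hh, insOp_one, map_inc_dec hat]
        · exact absurd hb hd
  · -- uniqueness
    intro y z hy hz
    obtain ⟨hy1, _, hy3⟩ := hy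
    obtain ⟨hz1, _, hz3⟩ := hz
    have Hy := extract hn hperm y.1 y.2 hy1 hy3
    have Hz := extract hn hperm z.1 z.2 hz1 hz3
    rcases y with ⟨ky, σy⟩
    rcases z with ⟨kz, σz⟩
    simp only [Prod.mk.injEq]
    rcases Hy with ⟨e1, f1, g1⟩ | ⟨e1, f1, f1', g1⟩ | ⟨e1, f1, f1', g1⟩ | ⟨e1, f1, f1', g1⟩ <;>
      rcases Hz with ⟨e2, f2, g2⟩ | ⟨e2, f2, f2', g2⟩ | ⟨e2, f2, f2', g2⟩ | ⟨e2, f2, f2', g2⟩ <;>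
      first
        | exact ⟨e1.trans e2.symm, g1.trans g2.symm⟩
        | omega
end

section
/- Let π ∈ S_n with n ≥ 1 and let π_1 be its first value in one-line notation. Then: (a) ρ_{1,1}(π) has the same number of recoils as π; (b) if π_1 ≠ 1, then ρ_{1,2}(π) has the same number of recoils as π; (c) if π_1 ≠ 1, then ρ_{π_1,1}(π) has the same number of recoils as π; (d) ρ_{π_1+1,1}(π) has exactly one more recoil than π. -/
/- ---------- auxiliary lemmas ---------- -/

def sh (i : ℕ) : ℕ → ℕ := fun v => if i ≤ v then v + 1 else v

lemma sh_inj (i : ℕ) : Function.Injective (sh i) := by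
  intro x y h; unfold sh at h; split_ifs at h <;> omega

lemma idx_map {f : ℕ → ℕ} (hf : Function.Injective f) (v : ℕ) (l : List ℕ) :
    (l.map f).idxOf (f v) = l.idxOf v := by
  induction l with
  | nil => simp
  | cons b t ih =>
    by_cases h : v = b
    · subst h; simp
    · rw [List.map_cons, List.idxOf_cons_ne _ (fun hc => h (hf hc).symm),
        List.idxOf_cons_ne _ (fun hc => h hc.symm), ih]

lemma idx_map_sh_of_lt {i u : ℕ} (hu : u < i) (l : List ℕ) :
    (l.map (sh i)).idxOf u = l.idxOf u := by
  have e : sh i u = u := by unfold sh; rw [if_neg (by omega)]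
  calc (l.map (sh i)).idxOf u = (l.map (sh i)).idxOf (sh i u) := by rw [e]
    _ = l.idxOf u := idx_map (sh_inj i) u l

lemma idx_map_sh_of_ge {i u : ℕ} (hu : i ≤ u) (l : List ℕ) :
    (l.map (sh i)).idxOf (u + 1) = l.idxOf u := by
  have e : sh i u = u + 1 := by unfold sh; rw [if_pos hu]
  calc (l.map (sh i)).idxOf (u + 1) = (l.map (sh i)).idxOf (sh i u) := by rw [e]
    _ = l.idxOf u := idx_map (sh_inj i) u l

lemma card_shift (n : ℕ) (P P' : ℕ → Prop) [DecidablePred P] [DecidablePred P']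
    (h1 : ¬ P' 1)
    (hsh : ∀ i, 1 ≤ i → i ≤ n - 1 → (P i ↔ P' (i+1))) :
    ((Finset.Icc 1 n).filter P').card = ((Finset.Icc 1 (n-1)).filter P).card := by
  have hset : (Finset.Icc 1 n).filter P'
      = ((Finset.Icc 1 (n-1)).filter P).image (· + 1) := by
    ext j
    simp only [Finset.mem_image, Finset.mem_filter, Finset.mem_Icc]
    constructor
    · rintro ⟨⟨hj1, hjn⟩, hP'⟩
      have hj2 : 2 ≤ j := by
        by_contra h
        have hj : j = 1 := by omega
        exact h1 (hj ▸ hP')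
      refine ⟨j - 1, ⟨⟨by omega, by omega⟩, (hsh (j-1) (by omega) (by omega)).2 ?_⟩, by omega⟩
      have : j - 1 + 1 = j := by omega
      rw [this]; exact hP'
    · rintro ⟨i, ⟨⟨hi1, hin⟩, hP⟩, rfl⟩
      exact ⟨⟨by omega, by omega⟩, (hsh i hi1 hin).1 hP⟩
  rw [hset, Finset.card_image_of_injective _ (add_left_injective 1)]

lemma card_piecewise (n a : ℕ) (ha1 : 1 ≤ a) (han : a ≤ n)
    (P P' : ℕ → Prop) [DecidablePred P] [DecidablePred P']
    (hlow : ∀ i, 1 ≤ i → i < a → (P i ↔ P' i))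
    (hPa : ¬ P a) (hP'a1 : ¬ P' (a+1))
    (hhigh : ∀ i, a < i → i ≤ n - 1 → (P i ↔ P' (i+1))) :
    ((Finset.Icc 1 n).filter P').card
      = ((Finset.Icc 1 (n-1)).filter P).card + (if P' a then 1 else 0) := by
  have hinj : Function.Injective (fun i => if i < a then i else i + 1) := by
    intro x y h; simp only at h; split_ifs at h <;> omega
  have hkey : ((Finset.Icc 1 n).filter P').erase a
      = ((Finset.Icc 1 (n-1)).filter P).image (fun i => if i < a then i else i + 1) := by
    ext j
    simp only [Finset.mem_erase, Finset.mem_image, Finset.mem_filter, Finset.mem_Icc]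
    constructor
    · rintro ⟨hja, ⟨hj1, hjn⟩, hP'⟩
      rcases Nat.lt_or_ge j a with h | h
      · exact ⟨j, ⟨⟨hj1, by omega⟩, (hlow j hj1 h).2 hP'⟩, by simp [h]⟩
      · have hj : a + 2 ≤ j := by
          rcases Nat.lt_or_ge j (a+2) with h2 | h2
          · have hj1' : j = a + 1 := by omega
            exact absurd (hj1' ▸ hP') hP'a1
          · exact h2
        refine ⟨j - 1, ⟨⟨by omega, by omega⟩, (hhigh (j-1) (by omega) (by omega)).2 ?_⟩, ?_⟩
        · have : j - 1 + 1 = j := by omega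
          rw [this]; exact hP'
        · have h' : ¬ (j - 1 < a) := by omega
          simp only [if_neg h']; omega
    · rintro ⟨i, ⟨⟨hi1, hin⟩, hP⟩, rfl⟩
      by_cases h : i < a
      · simp only [if_pos h]
        exact ⟨by omega, ⟨hi1, by omega⟩, (hlow i hi1 h).1 hP⟩
      · have hia : a < i := by
          rcases Nat.eq_or_lt_of_le (Nat.le_of_not_lt h) with h2 | h2
          · exact absurd (h2 ▸ hP) hPa
          · exact h2
        simp only [if_neg h]
        exact ⟨by omega, ⟨by omega, by omega⟩, (hhigh i hia hin).1 hP⟩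
  by_cases hpa : P' a
  · have ha_mem : a ∈ (Finset.Icc 1 n).filter P' :=
      Finset.mem_filter.2 ⟨Finset.mem_Icc.2 ⟨ha1, han⟩, hpa⟩
    rw [if_pos hpa, ← Finset.card_erase_add_one ha_mem, hkey,
      Finset.card_image_of_injective _ hinj]
  · rw [if_neg hpa, add_zero,
      ← Finset.erase_eq_of_notMem (by simp [hpa] : a ∉ (Finset.Icc 1 n).filter P'),
      hkey, Finset.card_image_of_injective _ hinj]

/-- Let `π ∈ S_n`, `n ≥ 1`, with first value `π₁ = w.headI`. Then
(a) `ρ_{1,1}(π)` has the same number of recoils as `π`;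
(b) if `π₁ ≠ 1` then `ρ_{1,2}(π)` has the same number of recoils as `π`;
(c) if `π₁ ≠ 1` then `ρ_{π₁,1}(π)` has the same number of recoils as `π`;
(d) `ρ_{π₁+1,1}(π)` has exactly one more recoil than `π`. -/
theorem insOp_recoils (n : ℕ) (hn : 1 ≤ n) (w : List ℕ) (hperm : IsPermList n w) :
    recoils (insOp 1 1 w) = recoils w ∧
    (w.headI ≠ 1 → recoils (insOp 1 2 w) = recoils w) ∧
    (w.headI ≠ 1 → recoils (insOp w.headI 1 w) = recoils w) ∧
    recoils (insOp (w.headI + 1) 1 w) = recoils w + 1 := by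
  have hp : w.Perm (List.range' 1 n) := hperm
  obtain ⟨a, t, rfl⟩ : ∃ a t, w = a :: t := by
    cases w with
    | nil =>
      exfalso
      have h := hp.length_eq
      simp at h
      omega
    | cons a t => exact ⟨a, t, rfl⟩
  simp only [List.headI_cons]
  have hlen : t.length + 1 = n := by simpa using hp.length_eq
  have hmem : ∀ v, v ∈ (a :: t) ↔ 1 ≤ v ∧ v ≤ n := by
    intro v; rw [hp.mem_iff, List.mem_range'_1]; omega
  have ha1 : 1 ≤ a := ((hmem a).1 (List.mem_cons_self)).1
  have han : a ≤ n := ((hmem a).1 (List.mem_cons_self)).2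
  have hposa : (a :: t).idxOf a = 0 := List.idxOf_cons_self
  have hpos : ∀ v, v ≠ a → (a :: t).idxOf v = t.idxOf v + 1 := by
    intro v hv
    rw [List.idxOf_cons_ne _ (Ne.symm hv)]
  have hrec : recoils (a :: t) = ((Finset.Icc 1 (n-1)).filter
      (fun i => (a :: t).idxOf (i+1) < (a :: t).idxOf i)).card := by
    simp only [recoils, List.length_cons, hlen]
  refine ⟨?_, ?_, ?_, ?_⟩
  · -- part (a)
    have hw' : insOp 1 1 (a :: t) = 1 :: (a :: t).map (sh 1) := by
      simp [insOp, sh]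
    have hlen' : (insOp 1 1 (a :: t)).length = n + 1 := by
      rw [hw']; simp only [List.length_cons, List.length_map]; omega
    have hrec' : recoils (insOp 1 1 (a :: t)) = ((Finset.Icc 1 n).filter
        (fun i => (insOp 1 1 (a :: t)).idxOf (i+1) < (insOp 1 1 (a :: t)).idxOf i)).card := by
      simp only [recoils, hlen', Nat.add_sub_cancel]
    have hp' : ∀ u, 1 ≤ u → (insOp 1 1 (a :: t)).idxOf (u+1) = (a :: t).idxOf u + 1 := by
      intro u hu
      rw [hw', List.idxOf_cons_ne _ (by omega : (1:ℕ) ≠ u + 1),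
        idx_map_sh_of_ge (by omega : 1 ≤ u)]
    have h1' : (insOp 1 1 (a :: t)).idxOf 1 = 0 := by
      rw [hw']; exact List.idxOf_cons_self
    have hfirst : ¬ ((insOp 1 1 (a :: t)).idxOf (1+1) < (insOp 1 1 (a :: t)).idxOf 1) := by
      rw [h1']; omega
    have hshift : ∀ i, 1 ≤ i → i ≤ n - 1 →
        ((a :: t).idxOf (i+1) < (a :: t).idxOf i ↔
          (insOp 1 1 (a :: t)).idxOf (i+1+1) < (insOp 1 1 (a :: t)).idxOf (i+1)) := by
      intro i hi1 hin
      rw [hp' (i+1) (by omega), hp' i hi1]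
      omega
    rw [hrec', hrec]
    exact card_shift n _ _ hfirst hshift
  · -- part (b)
    intro hne
    have hw' : insOp 1 2 (a :: t) = (a+1) :: 1 :: t.map (sh 1) := by
      simp [insOp, sh, ha1]
    have hlen' : (insOp 1 2 (a :: t)).length = n + 1 := by
      rw [hw']; simp only [List.length_cons, List.length_map]; omega
    have hrec' : recoils (insOp 1 2 (a :: t)) = ((Finset.Icc 1 n).filter
        (fun i => (insOp 1 2 (a :: t)).idxOf (i+1) < (insOp 1 2 (a :: t)).idxOf i)).card := by
      simp only [recoils, hlen', Nat.add_sub_cancel]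
    have h1' : (insOp 1 2 (a :: t)).idxOf 1 = 1 := by
      rw [hw', List.idxOf_cons_ne _ (by omega : a + 1 ≠ 1), List.idxOf_cons_self]
    have hpB : (insOp 1 2 (a :: t)).idxOf (a+1) = 0 := by
      rw [hw']; exact List.idxOf_cons_self
    have hpA : ∀ u, 1 ≤ u → u ≠ a →
        (insOp 1 2 (a :: t)).idxOf (u+1) = t.idxOf u + 2 := by
      intro u hu hua
      rw [hw', List.idxOf_cons_ne _ (by omega : a + 1 ≠ u + 1),
        List.idxOf_cons_ne _ (by omega : (1:ℕ) ≠ u + 1),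
        idx_map_sh_of_ge (by omega : 1 ≤ u)]
    have hfirst : ¬ ((insOp 1 2 (a :: t)).idxOf (1+1) < (insOp 1 2 (a :: t)).idxOf 1) := by
      have h2 := hpA 1 le_rfl (by omega)
      omega
    have hshift : ∀ i, 1 ≤ i → i ≤ n - 1 →
        ((a :: t).idxOf (i+1) < (a :: t).idxOf i ↔
          (insOp 1 2 (a :: t)).idxOf (i+1+1) < (insOp 1 2 (a :: t)).idxOf (i+1)) := by
      intro i hi1 hin
      by_cases hA : i + 1 = a
      · have e1 : (a :: t).idxOf (i+1) = 0 := by rw [hA]; exact hposa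
        have e2 := hpos i (by omega)
        have e3 : (insOp 1 2 (a :: t)).idxOf (i+1+1) = 0 := by
          rw [show i+1+1 = a+1 by omega]; exact hpB
        have e4 := hpA i hi1 (by omega)
        omega
      · by_cases hB : i = a
        · have e1 := hpos (i+1) (by omega)
          have e2 : (a :: t).idxOf i = 0 := by rw [hB]; exact hposa
          have e3 := hpA (i+1) (by omega) (by omega)
          have e4 : (insOp 1 2 (a :: t)).idxOf (i+1) = 0 := by
            rw [show i+1 = a+1 by omega]; exact hpB
          omega
        · have e1 := hpos (i+1) (by omega)
          have e2 := hpos i (by omega)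
          have e3 := hpA (i+1) (by omega) (by omega)
          have e4 := hpA i hi1 hB
          omega
    rw [hrec', hrec]
    exact card_shift n _ _ hfirst hshift
  · -- part (c)
    intro hne
    have hw' : insOp a 1 (a :: t) = a :: (a :: t).map (sh a) := by
      simp [insOp, sh]
    have hlen' : (insOp a 1 (a :: t)).length = n + 1 := by
      rw [hw']; simp only [List.length_cons, List.length_map]; omega
    have hrec' : recoils (insOp a 1 (a :: t)) = ((Finset.Icc 1 n).filter
        (fun i => (insOp a 1 (a :: t)).idxOf (i+1) < (insOp a 1 (a :: t)).idxOf i)).card := by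
      simp only [recoils, hlen', Nat.add_sub_cancel]
    have hc0 : (insOp a 1 (a :: t)).idxOf a = 0 := by
      rw [hw']; exact List.idxOf_cons_self
    have hclt : ∀ u, u < a → (insOp a 1 (a :: t)).idxOf u = (a :: t).idxOf u + 1 := by
      intro u hu
      rw [hw', List.idxOf_cons_ne _ (by omega : a ≠ u), idx_map_sh_of_lt hu]
    have hcgt : ∀ u, a ≤ u → (insOp a 1 (a :: t)).idxOf (u+1) = (a :: t).idxOf u + 1 := by
      intro u hu
      rw [hw', List.idxOf_cons_ne _ (by omega : a ≠ u + 1), idx_map_sh_of_ge hu]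
    have hlow : ∀ i, 1 ≤ i → i < a →
        ((a :: t).idxOf (i+1) < (a :: t).idxOf i ↔
          (insOp a 1 (a :: t)).idxOf (i+1) < (insOp a 1 (a :: t)).idxOf i) := by
      intro i hi1 hia
      have e2 := hpos i (by omega)
      have e4 := hclt i hia
      by_cases hA : i + 1 = a
      · have e1 : (a :: t).idxOf (i+1) = 0 := by rw [hA]; exact hposa
        have e3 : (insOp a 1 (a :: t)).idxOf (i+1) = 0 := by rw [hA]; exact hc0
        omega
      · have e1 := hpos (i+1) (by omega)
        have e3 := hclt (i+1) (by omega)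
        omega
    have hPa : ¬ ((a :: t).idxOf (a+1) < (a :: t).idxOf a) := by
      rw [hposa]; omega
    have hP'a1 : ¬ ((insOp a 1 (a :: t)).idxOf (a+1+1) < (insOp a 1 (a :: t)).idxOf (a+1)) := by
      have e1 := hcgt (a+1) (by omega)
      have e2 := hcgt a le_rfl
      omega
    have hhigh : ∀ i, a < i → i ≤ n - 1 →
        ((a :: t).idxOf (i+1) < (a :: t).idxOf i ↔
          (insOp a 1 (a :: t)).idxOf (i+1+1) < (insOp a 1 (a :: t)).idxOf (i+1)) := by
      intro i hai hin
      have e1 := hcgt (i+1) (by omega)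
      have e2 := hcgt i (by omega)
      omega
    have hnpa : ¬ ((insOp a 1 (a :: t)).idxOf (a+1) < (insOp a 1 (a :: t)).idxOf a) := by
      have e1 := hcgt a le_rfl
      omega
    have hcp := card_piecewise n a ha1 han _ _ hlow hPa hP'a1 hhigh
    rw [hrec', hrec, hcp, if_neg hnpa, add_zero]
  · -- part (d)
    have hw' : insOp (a+1) 1 (a :: t) = (a+1) :: (a :: t).map (sh (a+1)) := by
      simp [insOp, sh]
    have hlen' : (insOp (a+1) 1 (a :: t)).length = n + 1 := by
      rw [hw']; simp only [List.length_cons, List.length_map]; omega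
    have hrec' : recoils (insOp (a+1) 1 (a :: t)) = ((Finset.Icc 1 n).filter
        (fun i => (insOp (a+1) 1 (a :: t)).idxOf (i+1) < (insOp (a+1) 1 (a :: t)).idxOf i)).card := by
      simp only [recoils, hlen', Nat.add_sub_cancel]
    have hd0 : (insOp (a+1) 1 (a :: t)).idxOf (a+1) = 0 := by
      rw [hw']; exact List.idxOf_cons_self
    have hdle : ∀ u, u ≤ a → (insOp (a+1) 1 (a :: t)).idxOf u = (a :: t).idxOf u + 1 := by
      intro u hu
      rw [hw', List.idxOf_cons_ne _ (by omega : a + 1 ≠ u),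
        idx_map_sh_of_lt (by omega : u < a + 1)]
    have hdgt : ∀ u, a + 1 ≤ u → (insOp (a+1) 1 (a :: t)).idxOf (u+1) = (a :: t).idxOf u + 1 := by
      intro u hu
      rw [hw', List.idxOf_cons_ne _ (by omega : a + 1 ≠ u + 1),
        idx_map_sh_of_ge (by omega : a + 1 ≤ u)]
    have hlow : ∀ i, 1 ≤ i → i < a →
        ((a :: t).idxOf (i+1) < (a :: t).idxOf i ↔
          (insOp (a+1) 1 (a :: t)).idxOf (i+1) < (insOp (a+1) 1 (a :: t)).idxOf i) := by
      intro i hi1 hia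
      have e1 := hdle (i+1) (by omega)
      have e2 := hdle i (by omega)
      omega
    have hPa : ¬ ((a :: t).idxOf (a+1) < (a :: t).idxOf a) := by
      rw [hposa]; omega
    have hP'a1 : ¬ ((insOp (a+1) 1 (a :: t)).idxOf (a+1+1) < (insOp (a+1) 1 (a :: t)).idxOf (a+1)) := by
      rw [hd0]; omega
    have hhigh : ∀ i, a < i → i ≤ n - 1 →
        ((a :: t).idxOf (i+1) < (a :: t).idxOf i ↔
          (insOp (a+1) 1 (a :: t)).idxOf (i+1+1) < (insOp (a+1) 1 (a :: t)).idxOf (i+1)) := by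
      intro i hai hin
      have e1 := hdgt (i+1) (by omega)
      have e2 := hdgt i (by omega)
      omega
    have hpa : (insOp (a+1) 1 (a :: t)).idxOf (a+1) < (insOp (a+1) 1 (a :: t)).idxOf a := by
      have e1 := hdle a le_rfl
      omega
    have hcp := card_piecewise n a ha1 han _ _ hlow hPa hP'a1 hhigh
    rw [hrec', hrec, hcp, if_pos hpa]
end

section
/- If τ_1, τ_2 ∈ S_n both avoid the patterns 132 and 123, then the composition τ_1 ∘ τ_2 is 1-almost-increasing. -/
/-- A permutation is 1-almost-increasing if it avoids 4321, 4312, 3421 and 3412. -/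
def AlmostIncreasing (w : List ℕ) : Prop :=
  Avoids w [4,3,2,1] ∧ Avoids w [4,3,1,2] ∧ Avoids w [3,4,2,1] ∧ Avoids w [3,4,1,2]

/-- The composition `τ₁ ∘ τ₂` of two permutations given in one-line notation:
its `i`-th value is `τ₁(τ₂(i))`. -/
def compPerm (t1 t2 : List ℕ) : List ℕ := t2.map (fun v => t1.getD (v - 1) 0)



lemma perm_length {n : ℕ} {t : List ℕ} (h : IsPermList n t) : t.length = n := by
  simpa using h.length_eq

lemma perm_nodup {n : ℕ} {t : List ℕ} (h : IsPermList n t) : t.Nodup :=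
  h.nodup_iff.mpr (List.nodup_range' (h := Nat.one_pos) ..)

lemma perm_mem_bounds {n : ℕ} {t : List ℕ} (h : IsPermList n t) {x : ℕ} (hx : x ∈ t) :
    1 ≤ x ∧ x < 1 + n := List.mem_range'_1.mp (h.mem_iff.mp hx)

lemma coreC {t : List ℕ} (hnd : t.Nodup) (ha : Avoids t [1,3,2]) (hb : Avoids t [1,2,3])
    (q k k' : ℕ) (hqk : q < k) (hqk' : q < k') (hkk : k ≠ k')
    (hk : k < t.length) (hk' : k' < t.length)
    (h1 : t.getD q 0 < t.getD k 0) (h2 : t.getD q 0 < t.getD k' 0) : False := by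
  wlog hlt : k < k' generalizing k k'
  · exact this k' k hqk' hqk (Ne.symm hkk) hk' hk h2 h1 (by omega)
  have hq : q < t.length := hqk.trans hk
  rw [List.getD_eq_getElem t 0 hq, List.getD_eq_getElem t 0 hk] at h1
  rw [List.getD_eq_getElem t 0 hq, List.getD_eq_getElem t 0 hk'] at h2
  have hsub : [t[q], t[k], t[k']].Sublist t := by
    have hpw : List.Pairwise (· < ·) [(⟨q, hq⟩ : Fin t.length), ⟨k, hk⟩, ⟨k', hk'⟩] := by
      refine List.pairwise_cons.mpr ⟨?_, List.pairwise_cons.mpr ⟨?_, List.pairwise_singleton _ _⟩⟩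
      · intro a ha'
        rcases List.mem_cons.mp ha' with rfl | ha'
        · exact Fin.mk_lt_mk.mpr hqk
        · rcases List.mem_singleton.mp ha' with rfl
          exact Fin.mk_lt_mk.mpr hqk'
      · intro a ha'
        rcases List.mem_singleton.mp ha' with rfl
        exact Fin.mk_lt_mk.mpr hlt
    simpa using List.map_getElem_sublist hpw
  have hne : t[k] ≠ t[k'] := fun h => by
    have := hnd.getElem_inj_iff.mp h; omega
  rcases lt_or_gt_of_ne hne with hc | hc
  · refine hb ⟨_, hsub, rfl, ?_⟩
    intro a b hA hB
    have hA' : a < 3 := by simpa using hA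
    have hB' : b < 3 := by simpa using hB
    interval_cases a <;> interval_cases b <;> simp [List.getD] <;> omega
  · refine ha ⟨_, hsub, rfl, ?_⟩
    intro a b hA hB
    have hA' : a < 3 := by simpa using hA
    have hB' : b < 3 := by simpa using hB
    interval_cases a <;> interval_cases b <;> simp [List.getD] <;> omega

lemma main_aux (n : ℕ) (t1 t2 : List ℕ)
    (h1 : IsPermList n t1) (h2 : IsPermList n t2)
    (ha1 : Avoids t1 [1,3,2]) (hb1 : Avoids t1 [1,2,3])
    (ha2 : Avoids t2 [1,3,2]) (hb2 : Avoids t2 [1,2,3])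
    (p1 p2 p3 p4 : ℕ) (h12 : p1 < p2) (h23 : p2 < p3) (h34 : p3 < p4)
    (hp4 : p4 < t2.length)
    (v31 : t1.getD (t2.getD p3 0 - 1) 0 < t1.getD (t2.getD p1 0 - 1) 0)
    (v32 : t1.getD (t2.getD p3 0 - 1) 0 < t1.getD (t2.getD p2 0 - 1) 0)
    (v41 : t1.getD (t2.getD p4 0 - 1) 0 < t1.getD (t2.getD p1 0 - 1) 0)
    (v42 : t1.getD (t2.getD p4 0 - 1) 0 < t1.getD (t2.getD p2 0 - 1) 0) : False := by
  have hlen1 : t1.length = n := perm_length h1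
  have hlen2 : t2.length = n := perm_length h2
  have nd1 := perm_nodup h1
  have nd2 := perm_nodup h2
  have hp1 : p1 < t2.length := by omega
  have hp2 : p2 < t2.length := by omega
  have hp3 : p3 < t2.length := by omega
  have g1 : t2.getD p1 0 = t2[p1] := List.getD_eq_getElem t2 0 hp1
  have g2 : t2.getD p2 0 = t2[p2] := List.getD_eq_getElem t2 0 hp2
  have g3 : t2.getD p3 0 = t2[p3] := List.getD_eq_getElem t2 0 hp3
  have g4 : t2.getD p4 0 = t2[p4] := List.getD_eq_getElem t2 0 hp4
  have b1 : 1 ≤ t2.getD p1 0 ∧ t2.getD p1 0 < 1 + n :=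
    perm_mem_bounds h2 (g1 ▸ List.getElem_mem hp1)
  have b2 : 1 ≤ t2.getD p2 0 ∧ t2.getD p2 0 < 1 + n :=
    perm_mem_bounds h2 (g2 ▸ List.getElem_mem hp2)
  have b3 : 1 ≤ t2.getD p3 0 ∧ t2.getD p3 0 < 1 + n :=
    perm_mem_bounds h2 (g3 ▸ List.getElem_mem hp3)
  have b4 : 1 ≤ t2.getD p4 0 ∧ t2.getD p4 0 < 1 + n :=
    perm_mem_bounds h2 (g4 ▸ List.getElem_mem hp4)
  have ne12 : t2.getD p1 0 ≠ t2.getD p2 0 := by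
    rw [g1, g2]; intro h; have := nd2.getElem_inj_iff.mp h; omega
  have ne13 : t2.getD p1 0 ≠ t2.getD p3 0 := by
    rw [g1, g3]; intro h; have := nd2.getElem_inj_iff.mp h; omega
  have ne14 : t2.getD p1 0 ≠ t2.getD p4 0 := by
    rw [g1, g4]; intro h; have := nd2.getElem_inj_iff.mp h; omega
  have ne23 : t2.getD p2 0 ≠ t2.getD p3 0 := by
    rw [g2, g3]; intro h; have := nd2.getElem_inj_iff.mp h; omega
  have ne24 : t2.getD p2 0 ≠ t2.getD p4 0 := by
    rw [g2, g4]; intro h; have := nd2.getElem_inj_iff.mp h; omega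
  have ne34 : t2.getD p3 0 ≠ t2.getD p4 0 := by
    rw [g3, g4]; intro h; have := nd2.getElem_inj_iff.mp h; omega
  have F1 : ¬(t2.getD p3 0 < t2.getD p1 0 ∧ t2.getD p3 0 < t2.getD p2 0) :=
    fun ⟨a, b⟩ => coreC nd1 ha1 hb1 (t2.getD p3 0 - 1) (t2.getD p1 0 - 1) (t2.getD p2 0 - 1)
      (by omega) (by omega) (by omega) (by omega) (by omega) v31 v32
  have F2 : ¬(t2.getD p4 0 < t2.getD p1 0 ∧ t2.getD p4 0 < t2.getD p2 0) :=
    fun ⟨a, b⟩ => coreC nd1 ha1 hb1 (t2.getD p4 0 - 1) (t2.getD p1 0 - 1) (t2.getD p2 0 - 1)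
      (by omega) (by omega) (by omega) (by omega) (by omega) v41 v42
  have G123 : ¬(t2.getD p1 0 < t2.getD p2 0 ∧ t2.getD p1 0 < t2.getD p3 0) :=
    fun ⟨a, b⟩ => coreC nd2 ha2 hb2 p1 p2 p3 h12 (by omega) (by omega) hp2 hp3 a b
  have G124 : ¬(t2.getD p1 0 < t2.getD p2 0 ∧ t2.getD p1 0 < t2.getD p4 0) :=
    fun ⟨a, b⟩ => coreC nd2 ha2 hb2 p1 p2 p4 h12 (by omega) (by omega) hp2 hp4 a b
  have G134 : ¬(t2.getD p1 0 < t2.getD p3 0 ∧ t2.getD p1 0 < t2.getD p4 0) :=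
    fun ⟨a, b⟩ => coreC nd2 ha2 hb2 p1 p3 p4 (by omega) (by omega) (by omega) hp3 hp4 a b
  have G234 : ¬(t2.getD p2 0 < t2.getD p3 0 ∧ t2.getD p2 0 < t2.getD p4 0) :=
    fun ⟨a, b⟩ => coreC nd2 ha2 hb2 p2 p3 p4 h23 (by omega) (by omega) hp3 hp4 a b
  omega

lemma avoids_of_aux (n : ℕ) (t1 t2 : List ℕ)
    (h1 : IsPermList n t1) (h2 : IsPermList n t2)
    (ha1 : Avoids t1 [1,3,2]) (hb1 : Avoids t1 [1,2,3])
    (ha2 : Avoids t2 [1,3,2]) (hb2 : Avoids t2 [1,2,3])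
    (p : List ℕ) (hp : p.length = 4)
    (hc20 : p.getD 2 0 < p.getD 0 0) (hc21 : p.getD 2 0 < p.getD 1 0)
    (hc30 : p.getD 3 0 < p.getD 0 0) (hc31 : p.getD 3 0 < p.getD 1 0) :
    Avoids (compPerm t1 t2) p := by
  rintro ⟨s, hsub, hlen, hrel⟩
  obtain ⟨is, rfl, hpw⟩ := List.sublist_eq_map_getElem hsub
  rw [hp] at hlen
  simp only [List.length_map] at hlen
  obtain ⟨q1, q2, q3, q4, rfl⟩ :
      ∃ a b c d : Fin (compPerm t1 t2).length, is = [a, b, c, d] := by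
    rcases is with _ | ⟨a, is⟩
    · simp only [List.length_nil] at hlen; omega
    rcases is with _ | ⟨b, is⟩
    · simp only [List.length_cons, List.length_nil] at hlen; omega
    rcases is with _ | ⟨c, is⟩
    · simp only [List.length_cons, List.length_nil] at hlen; omega
    rcases is with _ | ⟨d, is⟩
    · simp only [List.length_cons, List.length_nil] at hlen; omega
    rcases is with _ | ⟨e, is⟩
    · exact ⟨a, b, c, d, rfl⟩
    · simp only [List.length_cons] at hlen; omega
  simp only [List.pairwise_cons, List.mem_cons, List.mem_singleton, List.not_mem_nil] at hpw
  have hwlen : (compPerm t1 t2).length = t2.length := by simp [compPerm]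
  have hw : ∀ (q : Fin (compPerm t1 t2).length),
      (compPerm t1 t2)[q] = t1.getD (t2.getD q.val 0 - 1) 0 := by
    intro q
    have hq : q.val < t2.length := by have := q.isLt; omega
    have e1 : (compPerm t1 t2)[q] = (compPerm t1 t2)[q.val]'q.isLt := rfl
    rw [e1]
    simp only [compPerm, List.getElem_map, List.getD_eq_getElem t2 0 hq]
  have A := (hrel 2 0 (by omega) (by omega)).mpr hc20
  have B := (hrel 2 1 (by omega) (by omega)).mpr hc21
  have C := (hrel 3 0 (by omega) (by omega)).mpr hc30
  have D := (hrel 3 1 (by omega) (by omega)).mpr hc31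
  simp only [List.map_cons, List.map_nil, List.getD_cons_succ, List.getD_cons_zero, hw]
    at A B C D
  have hq4 : (q4 : ℕ) < t2.length := by have := q4.isLt; omega
  exact main_aux n t1 t2 h1 h2 ha1 hb1 ha2 hb2 q1 q2 q3 q4
    (Fin.lt_def.mp (hpw.1 q2 (Or.inl rfl))) (Fin.lt_def.mp (hpw.2.1 q3 (Or.inl rfl)))
    (Fin.lt_def.mp (hpw.2.2.1 q4 (Or.inl rfl))) hq4 A B C D

/-- If `τ₁, τ₂ ∈ S_n` both avoid the patterns 132 and 123, then `τ₁ ∘ τ₂` is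
1-almost-increasing. -/
theorem comp_almostIncreasing (n : ℕ) (t1 t2 : List ℕ)
    (h1 : IsPermList n t1) (h2 : IsPermList n t2)
    (ha1 : Avoids t1 [1,3,2]) (hb1 : Avoids t1 [1,2,3])
    (ha2 : Avoids t2 [1,3,2]) (hb2 : Avoids t2 [1,2,3]) :
    AlmostIncreasing (compPerm t1 t2) := by
  refine ⟨?_, ?_, ?_, ?_⟩ <;>
    exact avoids_of_aux n t1 t2 h1 h2 ha1 hb1 ha2 hb2 _ rfl
      (by decide) (by decide) (by decide) (by decide)
end
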